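/- Let actions act on states q = (x, ℓ) ∈ X × L where each action a satisfies: if q.L = q'.L then a(q).L = a(q').L (discrete part depends only on discrete part), and ε-independent actions a, b satisfy ab(q).L = ba(q).L for all q. Then for any two ε-equivalent traces τ ≡_ε τ' and any states q₀, q₀' with q₀.L = q₀'.L, the final discrete states agree: τ applied to q₀ and τ' applied to q₀' yield states with equal L-components. -/

import Mathlib

/-- Apply a trace (finite sequence of actions) from left to right. -/
def applyTrace {S : Type*} (τ : List (S → S)) (x : S) : S :=
  τ.foldl (fun y f => f y) x

/-- One swap of an adjacent pair of `indep`-related actions. -/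
def Swap {A : Type*} (indep : A → A → Prop) (τ τ' : List A) : Prop :=
  ∃ (σ η : List A) (a b : A), indep a b ∧ τ = σ ++ a :: b :: η ∧ τ' = σ ++ b :: a :: η

/-- `ε`-independence of actions on states `(x, ℓ) ∈ X × L`: the discrete parts commute
exactly and the continuous parts are `ε`-close. -/
def SIndep {X L : Type*} [NormedAddCommGroup X] (ε : ℝ) (a b : X × L → X × L) : Prop :=
  (∀ q, (a (b q)).2 = (b (a q)).2) ∧ ∀ q, ‖(a (b q)).1 - (b (a q)).1‖ ≤ ε

lemma applyTrace_cons {S : Type*} (f : S → S) (τ : List (S → S)) (x : S) :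
    applyTrace (f :: τ) x = applyTrace τ (f x) := rfl

lemma applyTrace_append {S : Type*} (σ τ : List (S → S)) (x : S) :
    applyTrace (σ ++ τ) x = applyTrace τ (applyTrace σ x) := by
  simp [applyTrace, List.foldl_append]

lemma applyTrace_L {X L : Type*} (τ : List (X × L → X × L))
    (hL : ∀ f ∈ τ, ∀ q q' : X × L, q.2 = q'.2 → (f q).2 = (f q').2)
    (q q' : X × L) (h : q.2 = q'.2) :
    (applyTrace τ q).2 = (applyTrace τ q').2 := by
  induction τ generalizing q q' with
  | nil => exact h
  | cons f τ ih =>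
    rw [applyTrace_cons, applyTrace_cons]
    exact ih (fun g hg => hL g (List.mem_cons_of_mem _ hg))
      _ _ (hL f List.mem_cons_self q q' h)

lemma swap_perm {A : Type*} {indep : A → A → Prop} {τ τ' : List A}
    (h : Swap indep τ τ') : τ.Perm τ' := by
  obtain ⟨σ, η, a, b, _, rfl, rfl⟩ := h
  exact List.Perm.append_left σ (List.Perm.swap b a η)

lemma rtg_perm {A : Type*} {indep : A → A → Prop} {τ τ' : List A}
    (h : Relation.ReflTransGen (Swap indep) τ τ') : τ.Perm τ' := by
  induction h with
  | refl => exact List.Perm.refl _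
  | tail _ hs ih => exact ih.trans (swap_perm hs)

lemma swap_step {X L : Type*} [NormedAddCommGroup X] {ε : ℝ}
    {τ τ' : List (X × L → X × L)}
    (hL : ∀ f ∈ τ, ∀ q q' : X × L, q.2 = q'.2 → (f q).2 = (f q').2)
    (h : Swap (SIndep ε) τ τ') (q : X × L) :
    (applyTrace τ q).2 = (applyTrace τ' q).2 := by
  obtain ⟨σ, η, a, b, hab, rfl, rfl⟩ := h
  rw [applyTrace_append, applyTrace_append, applyTrace_cons, applyTrace_cons,
    applyTrace_cons, applyTrace_cons]
  refine applyTrace_L η (fun g hg => hL g ?_) _ _ (hab.1 _).symm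
  simp [hg]

/-- If each action's discrete effect depends only on the discrete part, then
`ε`-equivalent traces applied to states with equal discrete parts yield final states
with equal discrete parts. -/
theorem stmt10 {X L : Type*} [NormedAddCommGroup X] (ε : ℝ)
    (τ τ' : List (X × L → X × L))
    (hL : ∀ f ∈ τ, ∀ q q' : X × L, q.2 = q'.2 → (f q).2 = (f q').2)
    (hequiv : Relation.ReflTransGen (Swap (SIndep ε)) τ τ')
    (q₀ q₀' : X × L) (h0 : q₀.2 = q₀'.2) :
    (applyTrace τ q₀).2 = (applyTrace τ' q₀').2 := by
  induction hequiv with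
  | refl => exact applyTrace_L τ hL _ _ h0
  | tail hsteps hswap ih =>
    rename_i σ η
    have hLσ : ∀ f ∈ σ, ∀ q q' : X × L, q.2 = q'.2 → (f q).2 = (f q').2 := by
      intro f hf
      exact hL f ((rtg_perm hsteps).mem_iff.mpr hf)
    rw [ih, swap_step hLσ hswap q₀']
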